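/- Let $\bc \in \R^\ell_+$, $\beta \in \R$, $Q \in \R^{n\times\ell}$, $\alpha \in \R^n$. If there exists $\nu \in \R^\ell_+$ satisfying $D(\nu, e\bc) \le \beta$ and $Q\nu = (\mathbf{1}'\nu)\alpha$, then the signomial $g(x) = \beta \exp\{\alpha' x\} + \sum_{j=1}^\ell c_j \exp\{[Q'x]_j\}$ satisfies $g(x) \ge 0$ for all $x \in \R^n$. -/

import Mathlib

open Matrix Finset

noncomputable def relEnt {ℓ : ℕ} (ν lam : Fin ℓ → ℝ) : EReal :=
  ∑ j, if ν j = 0 then (0 : EReal) else if lam j = 0 then (⊤ : EReal)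
    else ((ν j * Real.log (ν j / lam j) : ℝ) : EReal)

lemma coe_finset_sum' {ℓ : ℕ} (f : Fin ℓ → ℝ) :
    ((∑ j, f j : ℝ) : EReal) = ∑ j, ((f j : ℝ) : EReal) :=
  map_sum (⟨⟨Real.toEReal, EReal.coe_zero⟩, fun x y => EReal.coe_add x y⟩ : ℝ →+ EReal) f univ

lemma key_ineq (ν c t : ℝ) (hν : 0 < ν) (hc : 0 < c) :
    ν * t - c * Real.exp t ≤ ν * Real.log (ν / (Real.exp 1 * c)) := by
  have hlog : Real.log (ν / (Real.exp 1 * c)) = Real.log (ν / c) - 1 := by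
    rw [Real.log_div hν.ne' (by positivity), Real.log_mul (Real.exp_pos 1).ne' hc.ne',
      Real.log_exp, Real.log_div hν.ne' hc.ne']
    ring
  set u := t - Real.log (ν / c) with hu
  have hexp : c * Real.exp t = ν * Real.exp u := by
    rw [hu, Real.exp_sub, Real.exp_log (by positivity)]
    field_simp
  have hlu : Real.log (ν / c) = t - u := by rw [hu]; ring
  have h2 : ν * (u + 1) ≤ ν * Real.exp u :=
    mul_le_mul_of_nonneg_left (Real.add_one_le_exp u) hν.le
  rw [hlog, hexp, hlu]
  nlinarith [h2]

theorem stmt0 {n ℓ : ℕ} (c : Fin ℓ → ℝ) (hc : ∀ j, 0 ≤ c j) (β : ℝ)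
    (Q : Matrix (Fin n) (Fin ℓ) ℝ) (α : Fin n → ℝ)
    (ν : Fin ℓ → ℝ) (hν : ∀ j, 0 ≤ ν j)
    (hD : relEnt ν (fun j => Real.exp 1 * c j) ≤ (β : EReal))
    (hQ : Q.mulVec ν = (∑ j, ν j) • α) :
    ∀ x : Fin n → ℝ,
      0 ≤ β * Real.exp (α ⬝ᵥ x) + ∑ j, c j * Real.exp (Qᵀ.mulVec x j) := by
  intro x
  set t : Fin ℓ → ℝ := fun j => Qᵀ.mulVec x j - α ⬝ᵥ x with ht
  -- pointwise inequality in EReal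
  have hle : ∀ j ∈ Finset.univ, ((ν j * t j - c j * Real.exp (t j) : ℝ) : EReal) ≤
      (if ν j = 0 then (0 : EReal) else if Real.exp 1 * c j = 0 then (⊤ : EReal)
        else ((ν j * Real.log (ν j / (Real.exp 1 * c j)) : ℝ) : EReal)) := by
    intro j _
    by_cases h0 : ν j = 0
    · simp only [h0, if_true]
      have h3 : (0:ℝ) * t j - c j * Real.exp (t j) ≤ 0 := by
        have := mul_nonneg (hc j) (Real.exp_pos (t j)).le
        linarith
      exact_mod_cast h3
    · simp only [h0, if_false]
      by_cases h1 : Real.exp 1 * c j = 0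
      · simp [h1]
      · simp only [h1, if_false]
        have hcj : 0 < c j := lt_of_le_of_ne (hc j)
          (fun h => h1 (by rw [← h]; ring))
        exact EReal.coe_le_coe_iff.mpr
          (key_ineq (ν j) (c j) (t j) (lt_of_le_of_ne (hν j) (Ne.symm h0)) hcj)
  have hsum : ((∑ j, (ν j * t j - c j * Real.exp (t j)) : ℝ) : EReal) ≤
      relEnt ν (fun j => Real.exp 1 * c j) := by
    rw [relEnt, coe_finset_sum']
    exact Finset.sum_le_sum hle
  have hreal : ∑ j, (ν j * t j - c j * Real.exp (t j)) ≤ β :=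
    EReal.coe_le_coe_iff.mp (le_trans hsum hD)
  -- ∑ ν j * t j = 0
  have hzero : ∑ j, ν j * t j = 0 := by
    have hd : ∑ j, ν j * (Qᵀ.mulVec x j) = x ⬝ᵥ Q.mulVec ν := by
      simp only [Matrix.mulVec, dotProduct, Matrix.transpose_apply, Finset.mul_sum]
      rw [Finset.sum_comm]
      exact Finset.sum_congr rfl fun i _ => Finset.sum_congr rfl fun j _ => by ring
    have h1 : ∑ j, ν j * (Qᵀ.mulVec x j) = (∑ j, ν j) * (α ⬝ᵥ x) := by
      rw [hd, hQ]
      simp only [dotProduct, Pi.smul_apply, smul_eq_mul, Finset.mul_sum]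
      exact Finset.sum_congr rfl fun i _ => by ring
    simp only [ht, mul_sub]
    rw [Finset.sum_sub_distrib, h1, ← Finset.sum_mul]
    ring
  rw [Finset.sum_sub_distrib, hzero] at hreal
  have hfinal : 0 ≤ β + ∑ j, c j * Real.exp (t j) := by linarith
  have hpos := (Real.exp_pos (α ⬝ᵥ x)).le
  have heq : Real.exp (α ⬝ᵥ x) * (β + ∑ j, c j * Real.exp (t j)) =
      β * Real.exp (α ⬝ᵥ x) + ∑ j, c j * Real.exp (Qᵀ.mulVec x j) := by
    rw [mul_add, Finset.mul_sum]
    congr 1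
    · ring
    · apply Finset.sum_congr rfl
      intro j _
      rw [ht]
      rw [mul_comm, mul_assoc, ← Real.exp_add]
      congr 2
      ring
  rw [← heq]
  exact mul_nonneg hpos hfinal
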